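/- arXiv:1810.09014 — 2 statements merged into one kernel-verified Lean document; each statement's English description precedes it below -/
import Mathlib

section
/- Let A = diag(-1/(R₁C₁), -1/(R₂C₂), 0) with R₁,C₁,R₂,C₂ > 0, K = (0, 0, k₃)ᵀ with k₃ > 0, and T(t) = (-1, -1, g(t)) with g(t) ∈ [g_min, g_max], 0 < g_min. Then the error system x̆'(t) = (A - K·T(t))·x̆(t) is globally exponentially stable: there exist constants M ≥ 1, λ > 0 such that ‖x̆(t)‖ ≤ M·e^{-λt}·‖x̆(0)‖ for all t ≥ 0. -/
set_option maxHeartbeats 1000000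

private lemma lyap_key (a b μ g gmin c ε k3 p q r : ℝ)
    (hμa : μ ≤ a) (hμb : μ ≤ b) (hμ : 0 < μ) (hgmin : 0 < gmin) (hg : gmin ≤ g)
    (hca : c ≤ a) (hcb : c ≤ b) (hck : c ≤ k3 * gmin)
    (hε : ε * k3 = μ * gmin / 2) (hεpos : 0 < ε) :
    2*p*(-a*p) + 2*q*(-b*q) + ε*(2*r*(k3*p + k3*q - k3*g*r)) ≤ -c*(p*p+q*q+ε*(r*r)) := by
  have key : ε*(2*r*(k3*p + k3*q - k3*g*r)) = μ*gmin*(r*p) + μ*gmin*(r*q) - μ*gmin*g*r^2 := by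
    have : ε*(2*r*(k3*p + k3*q - k3*g*r)) = (ε*k3) * (2*r*p + 2*r*q - 2*g*r^2) := by ring
    rw [this, hε]; ring
  rw [key]
  have hcε : c * ε ≤ μ * gmin^2 / 2 := by
    have h2 : c * ε ≤ (k3*gmin) * ε := by nlinarith
    have h3 : (k3*gmin)*ε = μ*gmin^2/2 := by
      have : (k3*gmin)*ε = (ε*k3)*gmin := by ring
      rw [this, hε]; ring
    linarith
  nlinarith [mul_nonneg hμ.le (sq_nonneg (p - gmin*r/2)),
    mul_nonneg hμ.le (sq_nonneg (q - gmin*r/2)),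
    mul_nonneg (mul_nonneg (mul_nonneg hμ.le hgmin.le) (sub_nonneg.2 hg)) (sq_nonneg r),
    sq_nonneg p, sq_nonneg q, sq_nonneg r,
    mul_nonneg (sub_nonneg.2 hμa) (sq_nonneg p),
    mul_nonneg (sub_nonneg.2 hμb) (sq_nonneg q),
    mul_nonneg (sub_nonneg.2 hca) (sq_nonneg p),
    mul_nonneg (sub_nonneg.2 hcb) (sq_nonneg q)]

/-- Global exponential stability of the observer error system `x̆' = (A - K·T(t))·x̆`. -/
theorem stmt_3 (R1 C1 R2 C2 k3 gmin gmax : ℝ)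
    (hR1 : 0 < R1) (hC1 : 0 < C1) (hR2 : 0 < R2) (hC2 : 0 < C2)
    (hk3 : 0 < k3) (hgmin : 0 < gmin)
    (g : ℝ → ℝ) (hg : ∀ t, g t ∈ Set.Icc gmin gmax)
    (A : Matrix (Fin 3) (Fin 3) ℝ)
    (hA : A = Matrix.diagonal ![-(1 / (R1 * C1)), -(1 / (R2 * C2)), 0])
    (K : Fin 3 → ℝ) (hK : K = ![0, 0, k3])
    (T : ℝ → Fin 3 → ℝ) (hT : ∀ t, T t = ![-1, -1, g t])
    (x : ℝ → Fin 3 → ℝ)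
    (hode : ∀ t i, HasDerivAt (fun s => x s i)
      ((Matrix.mulVec (A - Matrix.vecMulVec K (T t)) (x t)) i) t) :
    ∃ M ≥ (1 : ℝ), ∃ lam > (0 : ℝ), ∀ t, 0 ≤ t →
      ‖x t‖ ≤ M * Real.exp (-lam * t) * ‖x 0‖ := by
  obtain ⟨a, ha_def⟩ : ∃ a : ℝ, a = 1 / (R1 * C1) := ⟨_, rfl⟩
  obtain ⟨b, hb_def⟩ : ∃ b : ℝ, b = 1 / (R2 * C2) := ⟨_, rfl⟩
  have ha : 0 < a := by rw [ha_def]; positivity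
  have hb : 0 < b := by rw [hb_def]; positivity
  -- component ODEs
  have h0 : ∀ t, HasDerivAt (fun s => x s 0) (-a * x t 0) t := by
    intro t
    have := hode t 0
    rw [ha_def]
    simpa [hA, hK, hT, Matrix.mulVec, Matrix.vecMulVec, dotProduct,
      Fin.sum_univ_three, Matrix.diagonal] using this
  have h1 : ∀ t, HasDerivAt (fun s => x s 1) (-b * x t 1) t := by
    intro t
    have := hode t 1
    rw [hb_def]
    simpa [hA, hK, hT, Matrix.mulVec, Matrix.vecMulVec, dotProduct,
      Fin.sum_univ_three, Matrix.diagonal] using this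
  have h2 : ∀ t, HasDerivAt (fun s => x s 2)
      (k3 * x t 0 + k3 * x t 1 - k3 * g t * x t 2) t := by
    intro t
    have := hode t 2
    simp [hA, hK, hT, Matrix.mulVec, Matrix.vecMulVec, dotProduct,
      Fin.sum_univ_three, Matrix.diagonal] at this
    convert this using 1
    ring
  -- constants
  obtain ⟨μ, hμ_def⟩ : ∃ μ : ℝ, μ = min a b := ⟨_, rfl⟩
  have hμ : 0 < μ := hμ_def ▸ lt_min ha hb
  have hμa : μ ≤ a := hμ_def ▸ min_le_left _ _
  have hμb : μ ≤ b := hμ_def ▸ min_le_right _ _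
  obtain ⟨ε, hε_def⟩ : ∃ ε : ℝ, ε = μ * gmin / (2 * k3) := ⟨_, rfl⟩
  have hεpos : 0 < ε := by rw [hε_def]; positivity
  have hεk3 : ε * k3 = μ * gmin / 2 := by
    rw [hε_def]; field_simp
  obtain ⟨c, hc_def⟩ : ∃ c : ℝ, c = min a (min b (k3 * gmin)) := ⟨_, rfl⟩
  have hc : 0 < c := hc_def ▸ lt_min ha (lt_min hb (by positivity))
  have hca : c ≤ a := hc_def ▸ min_le_left _ _
  have hcb : c ≤ b := hc_def ▸ le_trans (min_le_right _ _) (min_le_left _ _)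
  have hck : c ≤ k3 * gmin := hc_def ▸ le_trans (min_le_right _ _) (min_le_right _ _)
  obtain ⟨m, hm_def⟩ : ∃ m : ℝ, m = min 1 ε := ⟨_, rfl⟩
  have hm : 0 < m := hm_def ▸ lt_min one_pos hεpos
  have hm1 : m ≤ 1 := hm_def ▸ min_le_left _ _
  have hmε : m ≤ ε := hm_def ▸ min_le_right _ _
  -- Lyapunov function
  obtain ⟨V, hV_def⟩ : ∃ V : ℝ → ℝ,
      V = fun t => x t 0 * x t 0 + x t 1 * x t 1 + ε * (x t 2 * x t 2) := ⟨_, rfl⟩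
  have hVt : ∀ t, V t = x t 0 * x t 0 + x t 1 * x t 1 + ε * (x t 2 * x t 2) := by
    intro t; rw [hV_def]
  obtain ⟨D, hD_def⟩ : ∃ D : ℝ → ℝ,
      D = fun t => 2*(x t 0)*(-a * x t 0) + 2*(x t 1)*(-b * x t 1)
        + ε*(2*(x t 2)*(k3 * x t 0 + k3 * x t 1 - k3 * g t * x t 2)) := ⟨_, rfl⟩
  have hDt : ∀ t, D t = 2*(x t 0)*(-a * x t 0) + 2*(x t 1)*(-b * x t 1)
      + ε*(2*(x t 2)*(k3 * x t 0 + k3 * x t 1 - k3 * g t * x t 2)) := by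
    intro t; rw [hD_def]
  have hV : ∀ t, HasDerivAt V (D t) t := by
    intro t
    have h := (((h0 t).mul (h0 t)).add ((h1 t).mul (h1 t))).add
      (((h2 t).mul (h2 t)).const_mul ε)
    rw [hV_def, hDt]
    refine h.congr_deriv ?_
    ring
  have hDle : ∀ t, D t ≤ -c * V t := by
    intro t
    rw [hDt, hVt]
    exact lyap_key a b μ (g t) gmin c ε k3 (x t 0) (x t 1) (x t 2)
      hμa hμb hμ hgmin (hg t).1 hca hcb hck hεk3 hεpos
  -- W = V * exp (c t) is antitone
  have hWanti : Antitone (fun t => V t * Real.exp (c * t)) := by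
    have hW : ∀ t, HasDerivAt (fun t => V t * Real.exp (c * t))
        (D t * Real.exp (c * t) + V t * (Real.exp (c * t) * (c * 1))) t :=
      fun t => (hV t).mul ((hasDerivAt_id t).const_mul c).exp
    apply antitone_of_deriv_nonpos
    · exact fun t => (hW t).differentiableAt
    · intro t
      rw [(hW t).deriv]
      have h := hDle t
      have he : (0:ℝ) < Real.exp (c * t) := Real.exp_pos _
      nlinarith
  -- V decay
  have hVdecay : ∀ t, 0 ≤ t → V t ≤ V 0 * Real.exp (-(c * t)) := by
    intro t ht
    have h : V t * Real.exp (c * t) ≤ V 0 * Real.exp (c * 0) := hWanti ht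
    rw [mul_zero, Real.exp_zero, mul_one] at h
    have hee : Real.exp (c * t) * Real.exp (-(c * t)) = 1 := by
      rw [← Real.exp_add]; simp
    calc V t = V t * Real.exp (c * t) * Real.exp (-(c * t)) := by
          rw [mul_assoc, hee, mul_one]
    _ ≤ V 0 * Real.exp (-(c * t)) := mul_le_mul_of_nonneg_right h (Real.exp_pos _).le
  -- lower bound for V in terms of components
  have hlow : ∀ t i, m * (x t i * x t i) ≤ V t := by
    intro t i
    fin_cases i
    · show m * (x t 0 * x t 0) ≤ V t
      rw [hVt]
      nlinarith [mul_self_nonneg (x t 1), mul_nonneg hεpos.le (mul_self_nonneg (x t 2)),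
        mul_nonneg (sub_nonneg.2 hm1) (mul_self_nonneg (x t 0))]
    · show m * (x t 1 * x t 1) ≤ V t
      rw [hVt]
      nlinarith [mul_self_nonneg (x t 0), mul_nonneg hεpos.le (mul_self_nonneg (x t 2)),
        mul_nonneg (sub_nonneg.2 hm1) (mul_self_nonneg (x t 1))]
    · show m * (x t 2 * x t 2) ≤ V t
      rw [hVt]
      nlinarith [mul_self_nonneg (x t 0), mul_self_nonneg (x t 1),
        mul_nonneg (sub_nonneg.2 hmε) (mul_self_nonneg (x t 2))]
  obtain ⟨N, hN⟩ : ∃ N : ℝ, N = ‖x 0‖ := ⟨_, rfl⟩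
  have hNnn : 0 ≤ N := hN ▸ norm_nonneg _
  have hcomp : ∀ i : Fin 3, x 0 i * x 0 i ≤ N * N := by
    intro i
    have h : |x 0 i| ≤ N := by rw [hN]; simpa [Real.norm_eq_abs] using norm_le_pi_norm (x 0) i
    calc x 0 i * x 0 i = |x 0 i| * |x 0 i| := by rw [abs_mul_abs_self]
    _ ≤ N * N := mul_le_mul h h (abs_nonneg _) hNnn
  have hV0 : V 0 ≤ (2 + ε) * (N * N) := by
    rw [hVt]
    have e2 : ε * (x 0 2 * x 0 2) ≤ ε * (N * N) :=
      mul_le_mul_of_nonneg_left (hcomp 2) hεpos.le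
    nlinarith [hcomp 0, hcomp 1, e2]
  -- final constants
  refine ⟨Real.sqrt ((2 + ε) / m), ?_, c / 2, half_pos hc, ?_⟩
  · rw [show (1:ℝ) = Real.sqrt 1 by simp]
    apply Real.sqrt_le_sqrt
    rw [le_div_iff₀ hm]
    linarith
  · intro t ht
    have hM2 : Real.sqrt ((2 + ε) / m) * Real.sqrt ((2 + ε) / m) = (2 + ε) / m :=
      Real.mul_self_sqrt (by positivity)
    set M : ℝ := Real.sqrt ((2 + ε) / m) with hM_def
    have hMnn : 0 ≤ M := Real.sqrt_nonneg _
    have hRHSnn : 0 ≤ M * Real.exp (-(c/2) * t) * N := by positivity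
    rw [← hN, pi_norm_le_iff_of_nonneg hRHSnn]
    intro i
    rw [Real.norm_eq_abs]
    have hsq : x t i * x t i ≤ (M * Real.exp (-(c/2) * t) * N) * (M * Real.exp (-(c/2) * t) * N) := by
      have hexp2 : Real.exp (-(c/2) * t) * Real.exp (-(c/2) * t) = Real.exp (-(c * t)) := by
        rw [← Real.exp_add]; ring_nf
      have h1 : m * (x t i * x t i) ≤ V t := hlow t i
      have h2 : V t ≤ V 0 * Real.exp (-(c * t)) := hVdecay t ht
      have h3 : V 0 * Real.exp (-(c * t)) ≤ (2 + ε) * (N * N) * Real.exp (-(c * t)) :=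
        mul_le_mul_of_nonneg_right hV0 (Real.exp_pos _).le
      have h4 : x t i * x t i ≤ (2 + ε) / m * (N * N) * Real.exp (-(c * t)) := by
        rw [div_mul_eq_mul_div, div_mul_eq_mul_div, le_div_iff₀ hm]
        nlinarith
      calc x t i * x t i ≤ (2 + ε) / m * (N * N) * Real.exp (-(c * t)) := h4
      _ = (M * Real.exp (-(c/2) * t) * N) * (M * Real.exp (-(c/2) * t) * N) := by
        rw [← hM2, ← hexp2]; ring
    calc |x t i| = Real.sqrt (x t i * x t i) := (Real.sqrt_mul_self_eq_abs _).symm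
    _ ≤ Real.sqrt ((M * Real.exp (-(c/2) * t) * N) * (M * Real.exp (-(c/2) * t) * N)) :=
        Real.sqrt_le_sqrt hsq
    _ = M * Real.exp (-(c/2) * t) * N := Real.sqrt_mul_self hRHSnn
end

section
/- With k₁ = k₂ = 0, the error system decouples: x̆₁(t) = x̆₁(0)e^{-t/(R₁C₁)}, x̆₂(t) = x̆₂(0)e^{-t/(R₂C₂)}, and x̆₃ satisfies x̆₃'(t) = -k₃·g(t)·x̆₃(t) + k₃·(x̆₁(t) + x̆₂(t)). If g(t) ≥ g_min > 0 and k₃ > 0, then x̆₃(t) → 0 as t → ∞. -/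
open Real Filter Set

private lemma lin_ode (a : ℝ) (y : ℝ → ℝ) (hy : ∀ t, HasDerivAt y (-a * y t) t) (t : ℝ) :
    y t = y 0 * Real.exp (-(a * t)) := by
  have H : ∀ s : ℝ, HasDerivAt (fun s => y s * Real.exp (a * s)) 0 s := by
    intro s
    have h : HasDerivAt (fun s => y s * Real.exp (a * s))
        (-a * y s * Real.exp (a * s) + y s * (Real.exp (a * s) * (a * 1))) s :=
      (hy s).mul (((hasDerivAt_id s).const_mul a).exp)
    convert h using 1
    ring
  have hconst : y t * Real.exp (a * t) = y 0 * Real.exp (a * 0) :=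
    is_const_of_deriv_eq_zero (fun u => (H u).differentiableAt) (fun u => (H u).deriv) t 0
  have h0 : y t * Real.exp (a * t) = y 0 := by simpa using hconst
  rw [Real.exp_neg, ← h0]
  field_simp

private lemma abs_slope_tendsto (x3 : ℝ → ℝ) (d x : ℝ) (h : HasDerivAt x3 d x) :
    Filter.Tendsto (fun z => (z - x)⁻¹ * (|x3 z| - |x3 x|)) (nhdsWithin x (Set.Ioi x))
      (nhds (if x3 x = 0 then |d| else if 0 < x3 x then d else -d)) := by
  have hs : Tendsto (fun z => (z - x)⁻¹ * (x3 z - x3 x)) (nhdsWithin x (Set.Ioi x)) (nhds d) := by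
    have h1 := (hasDerivAt_iff_tendsto_slope.1 h).mono_left
      (nhdsWithin_mono x (fun z hz => ne_of_gt hz))
    refine h1.congr (fun z => ?_)
    rw [slope_def_field, div_eq_inv_mul]
  by_cases h0 : x3 x = 0
  · rw [if_pos h0]
    refine hs.abs.congr' ?_
    filter_upwards [self_mem_nhdsWithin] with z hz
    rw [abs_mul, abs_of_pos (inv_pos.2 (sub_pos.2 hz)), h0, sub_zero, abs_zero, sub_zero]
  · rw [if_neg h0]
    have hc : ContinuousAt x3 x := h.continuousAt
    rcases lt_or_gt_of_ne h0 with hneg | hpos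
    · rw [if_neg (not_lt.2 hneg.le)]
      have hev : ∀ᶠ z in nhdsWithin x (Set.Ioi x), x3 z < 0 :=
        nhdsWithin_le_nhds (hc.eventually_mem (Iio_mem_nhds hneg))
      refine hs.neg.congr' ?_
      filter_upwards [hev] with z hz
      rw [abs_of_neg hz, abs_of_neg hneg]
      ring
    · rw [if_pos hpos]
      have hev : ∀ᶠ z in nhdsWithin x (Set.Ioi x), 0 < x3 z :=
        nhdsWithin_le_nhds (hc.eventually_mem (Ioi_mem_nhds hpos))
      refine hs.congr' ?_
      filter_upwards [hev] with z hz
      rw [abs_of_pos hz, abs_of_pos hpos]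

set_option maxHeartbeats 1000000 in
/-- With `k₁ = k₂ = 0` the error system decouples; the driven SoC error converges to zero. -/
theorem stmt_4 (R1 C1 R2 C2 k3 gmin : ℝ)
    (hR1 : 0 < R1) (hC1 : 0 < C1) (hR2 : 0 < R2) (hC2 : 0 < C2)
    (hk3 : 0 < k3) (hgmin : 0 < gmin)
    (g : ℝ → ℝ) (hg : ∀ t, gmin ≤ g t)
    (x1 x2 x3 : ℝ → ℝ)
    (h1 : ∀ t, HasDerivAt x1 (-(1 / (R1 * C1)) * x1 t) t)
    (h2 : ∀ t, HasDerivAt x2 (-(1 / (R2 * C2)) * x2 t) t)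
    (h3 : ∀ t, HasDerivAt x3 (-k3 * g t * x3 t + k3 * (x1 t + x2 t)) t) :
    (∀ t, x1 t = x1 0 * Real.exp (-t / (R1 * C1))) ∧
    (∀ t, x2 t = x2 0 * Real.exp (-t / (R2 * C2))) ∧
    Filter.Tendsto x3 Filter.atTop (nhds 0) := by
  have ha1 : 0 < 1 / (R1 * C1) := by positivity
  have ha2 : 0 < 1 / (R2 * C2) := by positivity
  have P1 : ∀ t, x1 t = x1 0 * Real.exp (-(1 / (R1 * C1) * t)) := lin_ode _ x1 h1
  have P2 : ∀ t, x2 t = x2 0 * Real.exp (-(1 / (R2 * C2) * t)) := lin_ode _ x2 h2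
  refine ⟨fun t => by rw [P1 t]; congr 1; ring, fun t => by rw [P2 t]; congr 1; ring, ?_⟩
  set c : ℝ := min (1 / (R1 * C1)) (1 / (R2 * C2)) with hcdef
  have hc : 0 < c := lt_min ha1 ha2
  set b : ℝ := k3 * gmin with hbdef
  have hb : 0 < b := mul_pos hk3 hgmin
  set Kc : ℝ := k3 * (|x1 0| + |x2 0|) with hKcdef
  have hKc : 0 ≤ Kc := by positivity
  -- drive bound
  have hu : ∀ t, 0 ≤ t → |k3 * (x1 t + x2 t)| ≤ Kc * Real.exp (-(c * t)) := by
    intro t ht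
    have e1 : |x1 t| ≤ |x1 0| * Real.exp (-(c * t)) := by
      rw [P1 t, abs_mul, abs_of_pos (Real.exp_pos _)]
      have : -(1 / (R1 * C1) * t) ≤ -(c * t) := by
        have := min_le_left (1 / (R1 * C1)) (1 / (R2 * C2))
        nlinarith
      exact mul_le_mul_of_nonneg_left (Real.exp_le_exp.2 this) (abs_nonneg _)
    have e2 : |x2 t| ≤ |x2 0| * Real.exp (-(c * t)) := by
      rw [P2 t, abs_mul, abs_of_pos (Real.exp_pos _)]
      have : -(1 / (R2 * C2) * t) ≤ -(c * t) := by
        have := min_le_right (1 / (R1 * C1)) (1 / (R2 * C2))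
        nlinarith
      exact mul_le_mul_of_nonneg_left (Real.exp_le_exp.2 this) (abs_nonneg _)
    calc |k3 * (x1 t + x2 t)| = k3 * |x1 t + x2 t| := by
          rw [abs_mul, abs_of_pos hk3]
      _ ≤ k3 * (|x1 t| + |x2 t|) := mul_le_mul_of_nonneg_left (abs_add_le _ _) hk3.le
      _ ≤ k3 * ((|x1 0| + |x2 0|) * Real.exp (-(c * t))) := by nlinarith
      _ = Kc * Real.exp (-(c * t)) := by rw [hKcdef]; ring
  set f : ℝ → ℝ := fun t => |x3 t| with hfdef
  set d : ℝ → ℝ := fun t => -k3 * g t * x3 t + k3 * (x1 t + x2 t) with hddef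
  set D : ℝ → ℝ := fun t => if x3 t = 0 then |d t| else if 0 < x3 t then d t else -(d t)
    with hDdef
  have hslope : ∀ x r, D x < r →
      ∃ᶠ z in nhdsWithin x (Set.Ioi x), (z - x)⁻¹ * (f z - f x) < r := by
    intro x r hr
    have ht := abs_slope_tendsto x3 (d x) x (h3 x)
    exact (ht.eventually_lt_const hr).frequently
  have hDle : ∀ a x, 0 ≤ a → a ≤ x → D x ≤ -b * f x + Kc * Real.exp (-(c * a)) := by
    intro a x ha hax
    have hux : |k3 * (x1 x + x2 x)| ≤ Kc * Real.exp (-(c * a)) := by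
      refine (hu x (ha.trans hax)).trans ?_
      have : -(c * x) ≤ -(c * a) := by nlinarith
      exact mul_le_mul_of_nonneg_left (Real.exp_le_exp.2 this) hKc
    have hbg : b ≤ k3 * g x := mul_le_mul_of_nonneg_left (hg x) hk3.le
    simp only [hDdef, hfdef, hddef]
    by_cases h0 : x3 x = 0
    · simp only [if_pos h0, h0, abs_zero, mul_zero, neg_zero, zero_add, neg_mul]
      simpa [h0] using hux
    · rw [if_neg h0]
      rcases lt_or_gt_of_ne h0 with hneg | hpos
      · rw [if_neg (not_lt.2 hneg.le), abs_of_neg hneg]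
        nlinarith [neg_abs_le (k3 * (x1 x + x2 x)), le_abs_self (k3 * (x1 x + x2 x)),
          mul_le_mul_of_nonpos_right hbg hneg.le]
      · rw [if_pos hpos, abs_of_pos hpos]
        nlinarith [le_abs_self (k3 * (x1 x + x2 x)),
          mul_le_mul_of_nonneg_right hbg hpos.le]
  have hcont : Continuous f :=
    (continuous_iff_continuousAt.2 fun t => (h3 t).continuousAt).abs
  have hgron : ∀ a t, 0 ≤ a → a ≤ t →
      f t ≤ gronwallBound (f a) (-b) (Kc * Real.exp (-(c * a))) (t - a) := by
    intro a t ha hat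
    exact le_gronwallBound_of_liminf_deriv_right_le (f' := D) hcont.continuousOn
      (fun x _ r hr => hslope x r hr) le_rfl
      (fun x hx => hDle a x ha hx.1) t ⟨hat, le_rfl⟩
  have hbne : (-b : ℝ) ≠ 0 := neg_ne_zero.2 hb.ne'
  have gbound : ∀ δ ε s : ℝ, 0 ≤ ε → 0 ≤ s →
      gronwallBound δ (-b) ε s ≤ δ * Real.exp (-b * s) + ε / b := by
    intro δ ε s hε hs
    rw [gronwallBound_of_K_ne_0 hbne]
    have h1 : Real.exp (-b * s) ≤ 1 := by
      rw [← Real.exp_zero]; exact Real.exp_le_exp.2 (by nlinarith)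
    have h2 : (0:ℝ) < Real.exp (-b * s) := Real.exp_pos _
    have hεb : 0 ≤ ε / b := div_nonneg hε hb.le
    have key : ε / (-b) * (Real.exp (-b * s) - 1) ≤ ε / b := by
      rw [div_neg]
      nlinarith
    linarith
  have hM : ∀ t, 0 ≤ t → f t ≤ |x3 0| + Kc / b := by
    intro t ht
    have hg1 := hgron 0 t le_rfl ht
    have hg2 := gbound (f 0) (Kc * Real.exp (-(c * 0))) (t - 0) (by positivity) (by linarith)
    have he1 : Real.exp (-b * (t - 0)) ≤ 1 := by
      rw [← Real.exp_zero]; exact Real.exp_le_exp.2 (by nlinarith)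
    have he2 : (0:ℝ) < Real.exp (-b * (t - 0)) := Real.exp_pos _
    have hf0 : f 0 = |x3 0| := rfl
    have hexp0 : Real.exp (-(c * 0)) = 1 := by norm_num
    rw [hexp0, mul_one] at hg2
    have habs : 0 ≤ f 0 := abs_nonneg _
    calc f t ≤ gronwallBound (f 0) (-b) (Kc * Real.exp (-(c * 0))) (t - 0) := hg1
      _ = gronwallBound (f 0) (-b) Kc (t - 0) := by rw [hexp0, mul_one]
      _ ≤ f 0 * Real.exp (-b * (t - 0)) + Kc / b := hg2
      _ ≤ |x3 0| + Kc / b := by rw [← hf0]; nlinarith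
  set M : ℝ := |x3 0| + Kc / b with hMdef
  have hM0 : 0 ≤ M := by
    rw [hMdef]
    have : 0 ≤ Kc / b := div_nonneg hKc hb.le
    have := abs_nonneg (x3 0)
    linarith
  have hfinal : ∀ t, 0 ≤ t →
      f t ≤ M * Real.exp (-b * (t / 2)) + Kc * Real.exp (-(c * (t / 2))) / b := by
    intro t ht
    have ht2 : 0 ≤ t / 2 := by linarith
    have hg1 := hgron (t / 2) t ht2 (by linarith)
    have hmono : gronwallBound (f (t / 2)) (-b) (Kc * Real.exp (-(c * (t / 2)))) (t - t / 2)
        ≤ gronwallBound M (-b) (Kc * Real.exp (-(c * (t / 2)))) (t - t / 2) := by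
      rw [gronwallBound_of_K_ne_0 hbne, gronwallBound_of_K_ne_0 hbne]
      have h1 := hM (t / 2) ht2
      have h2 : (0:ℝ) < Real.exp (-b * (t - t / 2)) := Real.exp_pos _
      nlinarith
    have hg2 := gbound M (Kc * Real.exp (-(c * (t / 2)))) (t - t / 2) (by positivity)
      (by linarith)
    have ht' : t - t / 2 = t / 2 := by ring
    rw [ht'] at hmono hg2 hg1
    calc f t ≤ gronwallBound (f (t / 2)) (-b) (Kc * Real.exp (-(c * (t / 2)))) (t / 2) := hg1
      _ ≤ gronwallBound M (-b) (Kc * Real.exp (-(c * (t / 2)))) (t / 2) := hmono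
      _ ≤ M * Real.exp (-b * (t / 2)) + Kc * Real.exp (-(c * (t / 2))) / b := hg2
  -- the bounding function tends to zero
  have hB : Filter.Tendsto
      (fun t => M * Real.exp (-b * (t / 2)) + Kc * Real.exp (-(c * (t / 2))) / b)
      Filter.atTop (nhds 0) := by
    have hb2 : Filter.Tendsto (fun t : ℝ => -b * (t / 2)) Filter.atTop Filter.atBot := by
      have : Filter.Tendsto (fun t : ℝ => -(b / 2) * t) Filter.atTop Filter.atBot :=
        (tendsto_const_mul_atBot_of_neg (by linarith : -(b / 2) < 0)).2 tendsto_id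
      exact this.congr (fun t => by ring)
    have hc2 : Filter.Tendsto (fun t : ℝ => -(c * (t / 2))) Filter.atTop Filter.atBot := by
      have : Filter.Tendsto (fun t : ℝ => -(c / 2) * t) Filter.atTop Filter.atBot :=
        (tendsto_const_mul_atBot_of_neg (by linarith : -(c / 2) < 0)).2 tendsto_id
      exact this.congr (fun t => by ring)
    have t1 : Filter.Tendsto (fun t => M * Real.exp (-b * (t / 2))) Filter.atTop (nhds 0) := by
      have := (Real.tendsto_exp_atBot.comp hb2).const_mul M
      simpa using this
    have t2 : Filter.Tendsto (fun t => Kc * Real.exp (-(c * (t / 2))) / b)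
        Filter.atTop (nhds 0) := by
      have := ((Real.tendsto_exp_atBot.comp hc2).const_mul Kc).div_const b
      simpa using this
    simpa using t1.add t2
  have habs : Filter.Tendsto f Filter.atTop (nhds 0) :=
    squeeze_zero' (Filter.Eventually.of_forall fun t => abs_nonneg _)
      ((Filter.eventually_ge_atTop 0).mono fun t ht => hfinal t ht) hB
  exact (tendsto_zero_iff_abs_tendsto_zero x3).2 habs
end
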